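/- If cost functions f₁ and f₂ are both regular with respect to a cost model, and L ⊆ Σ* is a regular language, then the choice function mapping w to f₁(w) if w ∈ L and to f₂(w) otherwise is also regular with respect to that cost model. -/

import Mathlib

/-- Terms over a ranked alphabet `F` (with arities `ar`), possibly containing the
parameter `?` (a hole) at leaves. -/
inductive PTerm (F : Type*) (ar : F → ℕ) : Type _
  | node (f : F) (ch : Fin (ar f) → PTerm F ar) : PTerm F ar
  | hole : PTerm F ar

namespace PTerm

variable {F : Type*} {ar : F → ℕ}

/-- Substitute the term `s` for every hole of `t`. -/
def plug : PTerm F ar → PTerm F ar → PTerm F ar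
  | .node f ch, s => .node f (fun i => (ch i).plug s)
  | .hole, s => s

/-- A term is closed (complete) if it contains no hole. -/
def Closed : PTerm F ar → Prop
  | .node _ ch => ∀ i, (ch i).Closed
  | .hole => False

/-- Evaluate a term in a cost domain `D`, given an interpretation of the function
symbols; holes get the (irrelevant for closed terms) value `h`. -/
def evalD {D : Type*} (interp : ∀ f : F, (Fin (ar f) → D) → D) (h : D) :
    PTerm F ar → D
  | .node f ch => interp f (fun i => (ch i).evalD interp h)
  | .hole => h

end PTerm

/-- Update expressions of a streaming string-to-tree transducer: terms built from
the ranked alphabet, registers, the parameter `?`, and substitution. -/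
inductive TExpr (F : Type*) (ar : F → ℕ) (X : Type*) : Type _
  | node (f : F) (ch : Fin (ar f) → TExpr F ar X) : TExpr F ar X
  | reg (x : X) : TExpr F ar X
  | hole : TExpr F ar X
  | subst (e₁ e₂ : TExpr F ar X) : TExpr F ar X

namespace TExpr

variable {F : Type*} {ar : F → ℕ} {X : Type*}

/-- Evaluate an update expression under a register valuation. -/
def eval (ν : X → PTerm F ar) : TExpr F ar X → PTerm F ar
  | .node f ch => .node f (fun i => (ch i).eval ν)
  | .reg x => ν x
  | .hole => .hole
  | .subst e₁ e₂ => (e₁.eval ν).plug (e₂.eval ν)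

/-- The multiset of register occurrences of an expression. -/
def occs : TExpr F ar X → Multiset X
  | .node _ ch => ∑ i, (ch i).occs
  | .reg x => {x}
  | .hole => 0
  | .subst e₁ e₂ => e₁.occs + e₂.occs

end TExpr

/-- A (copyless) streaming string-to-tree transducer: a deterministic machine
with finitely many states and registers holding parameterized terms, updated at
each step by copyless expressions (each register is used at most once on the
right-hand sides of a transition, and at most once in an output expression). -/
structure SSTT (σ F : Type*) (ar : F → ℕ) where
  Q : Type
  finQ : Fintype Q
  q0 : Q
  X : Type
  finX : Fintype X
  δ : Q → σ → Q
  ρ : Q → σ → X → TExpr F ar X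
  μ : Q → Option (TExpr F ar X)
  copyless : ∀ q a, (finX.elems.val.bind fun y => (ρ q a y).occs).Nodup
  copylessOut : ∀ q e, μ q = some e → e.occs.Nodup

namespace SSTT

variable {σ F : Type*} {ar : F → ℕ}

/-- One step of the transducer. -/
def step (T : SSTT σ F ar) (cfg : T.Q × (T.X → PTerm F ar)) (a : σ) :
    T.Q × (T.X → PTerm F ar) :=
  (T.δ cfg.1 a, fun x => (T.ρ cfg.1 a x).eval cfg.2)

/-- The configuration reached on input `w` (registers initialized to `?`). -/
def run (T : SSTT σ F ar) (w : List σ) : T.Q × (T.X → PTerm F ar) :=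
  w.foldl T.step (T.q0, fun _ => PTerm.hole)

/-- The (partial) string-to-term transduction computed by the transducer. -/
def out (T : SSTT σ F ar) (w : List σ) : Option (PTerm F ar) :=
  (T.μ (T.run w).1).map (·.eval (T.run w).2)

end SSTT

/-- A (partial) cost function `f : Σ* → D` is regular with respect to the cost
model given by the ranked alphabet `(F, ar)`, the regular set of terms described
by the predicate `P`, and the interpretation `interp`, if there is a regular
string-to-term transduction (given by an SSTT) producing closed terms in `P`,
whose composition with term evaluation is `f`. -/
def RegularCostFn {σ F D : Type*} (ar : F → ℕ)
    (interp : ∀ f : F, (Fin (ar f) → D) → D) (h : D)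
    (P : PTerm F ar → Prop) (f : List σ → Option D) : Prop :=
  ∃ T : SSTT σ F ar,
    ∀ w, (∀ t, T.out w = some t → P t ∧ t.Closed) ∧
      (T.out w).map (PTerm.evalD interp h) = f w

namespace TExpr

variable {F : Type*} {ar : F → ℕ} {X Y : Type*}

/-- Rename registers. -/
def rmap (g : X → Y) : TExpr F ar X → TExpr F ar Y
  | .node f ch => .node f (fun i => (ch i).rmap g)
  | .reg x => .reg (g x)
  | .hole => .hole
  | .subst e₁ e₂ => .subst (e₁.rmap g) (e₂.rmap g)

theorem eval_rmap (g : X → Y) (ν : Y → PTerm F ar) (e : TExpr F ar X) :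
    (e.rmap g).eval ν = e.eval (fun x => ν (g x)) := by
  induction e with
  | node f ch ih => simp [rmap, eval, ih]
  | reg x => rfl
  | hole => rfl
  | subst e₁ e₂ ih₁ ih₂ => simp [rmap, eval, ih₁, ih₂]

theorem occs_rmap (g : X → Y) (e : TExpr F ar X) :
    (e.rmap g).occs = e.occs.map g := by
  induction e with
  | node f ch ih =>
      simp only [rmap, occs, ih]
      exact (map_sum (Multiset.mapAddMonoidHom g) _ _).symm
  | reg x => rfl
  | hole => rfl
  | subst e₁ e₂ ih₁ ih₂ => simp [rmap, occs, ih₁, ih₂]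

end TExpr

open Classical in
/-- Closure of regular cost functions under regular choice: if `f₁` and `f₂` are
regular with respect to a cost model and `L ⊆ Σ*` is a regular language, then the
choice function mapping `w` to `f₁(w)` if `w ∈ L` and to `f₂(w)` otherwise is also
regular with respect to that cost model. -/
theorem RegularCostFn.choice {σ F D : Type*} [Fintype σ] (ar : F → ℕ)
    (interp : ∀ f : F, (Fin (ar f) → D) → D) (h : D)
    (P : PTerm F ar → Prop) (f₁ f₂ : List σ → Option D)
    (L : Language σ) (hL : L.IsRegular)
    (hf₁ : RegularCostFn ar interp h P f₁)
    (hf₂ : RegularCostFn ar interp h P f₂) :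
    RegularCostFn ar interp h P (fun w => if w ∈ L then f₁ w else f₂ w) := by
  obtain ⟨S, finS, M, hM⟩ := hL
  obtain ⟨T₁, hT₁⟩ := hf₁
  obtain ⟨T₂, hT₂⟩ := hf₂
  letI := T₁.finQ; letI := T₂.finQ; letI := T₁.finX; letI := T₂.finX
  set T : SSTT σ F ar :=
    { Q := T₁.Q × T₂.Q × S
      finQ := inferInstance
      q0 := (T₁.q0, T₂.q0, M.start)
      X := T₁.X ⊕ T₂.X
      finX := inferInstance
      δ := fun q a => (T₁.δ q.1 a, T₂.δ q.2.1 a, M.step q.2.2 a)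
      ρ := fun q a x =>
        Sum.elim (fun x => (T₁.ρ q.1 a x).rmap Sum.inl)
          (fun x => (T₂.ρ q.2.1 a x).rmap Sum.inr) x
      μ := fun q =>
        if q.2.2 ∈ M.accept then (T₁.μ q.1).map (·.rmap Sum.inl)
        else (T₂.μ q.2.1).map (·.rmap Sum.inr)
      copyless := by
        intro q a
        show (((Finset.univ : Finset T₁.X).disjSum Finset.univ).val.bind _).Nodup
        rw [Finset.val_disjSum, Multiset.disjSum, Multiset.add_bind,
          Multiset.bind_map, Multiset.bind_map]
        simp only [Function.comp_def, Sum.elim_inl, Sum.elim_inr, TExpr.occs_rmap]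
        rw [← Multiset.map_bind, ← Multiset.map_bind, Multiset.nodup_add]
        refine ⟨(T₁.copyless q.1 a).map Sum.inl_injective,
          (T₂.copyless q.2.1 a).map Sum.inr_injective,
          Multiset.disjoint_left.mpr ?_⟩
        intro x hx hx'
        obtain ⟨y, -, rfl⟩ := Multiset.mem_map.1 hx
        obtain ⟨z, -, hz⟩ := Multiset.mem_map.1 hx'
        exact Sum.inl_ne_inr hz.symm
      copylessOut := by
        intro q e he
        try dsimp only at he
        split_ifs at he
        · obtain ⟨e₁, he₁, rfl⟩ := Option.map_eq_some_iff.1 he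
          rw [TExpr.occs_rmap]
          exact (T₁.copylessOut _ _ he₁).map Sum.inl_injective
        · obtain ⟨e₂, he₂, rfl⟩ := Option.map_eq_some_iff.1 he
          rw [TExpr.occs_rmap]
          exact (T₂.copylessOut _ _ he₂).map Sum.inr_injective }
  have hrun : ∀ w,
      T.run w = ((((T₁.run w).1, (T₂.run w).1, M.eval w) : T.Q),
        Sum.elim (T₁.run w).2 (T₂.run w).2) := by
    intro w
    suffices H : ∀ (w : List σ) (c₁ : T₁.Q × (T₁.X → PTerm F ar))
        (c₂ : T₂.Q × (T₂.X → PTerm F ar)) (s : S),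
        w.foldl T.step ((c₁.1, c₂.1, s), Sum.elim c₁.2 c₂.2)
          = (((w.foldl T₁.step c₁).1, (w.foldl T₂.step c₂).1, M.evalFrom s w),
            Sum.elim (w.foldl T₁.step c₁).2 (w.foldl T₂.step c₂).2) by
      have := H w (T₁.q0, fun _ => PTerm.hole) (T₂.q0, fun _ => PTerm.hole) M.start
      have hinit : (Sum.elim (fun _ => PTerm.hole) (fun _ => PTerm.hole) :
          T₁.X ⊕ T₂.X → PTerm F ar) = fun _ => PTerm.hole := by
        funext x; cases x <;> rfl
      rw [hinit] at this
      exact this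
    intro w
    induction w with
    | nil => intro c₁ c₂ s; rfl
    | cons a w ih =>
        intro c₁ c₂ s
        simp only [List.foldl_cons]
        rw [show T.step ((c₁.1, c₂.1, s), Sum.elim c₁.2 c₂.2)
            a = ((((T₁.step c₁ a).1, (T₂.step c₂ a).1, M.step s a) : T.Q),
              Sum.elim (T₁.step c₁ a).2 (T₂.step c₂ a).2) from ?_]
        · exact ih (T₁.step c₁ a) (T₂.step c₂ a) (M.step s a)
        · simp only [SSTT.step, T]
          refine congrArg _ ?_
          funext x
          cases x with
          | inl x => simp [TExpr.eval_rmap]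
          | inr x => simp [TExpr.eval_rmap]
  have hout : ∀ w, T.out w = if w ∈ L then T₁.out w else T₂.out w := by
    intro w
    have hmem : w ∈ L ↔ M.eval w ∈ M.accept := by
      rw [← hM]; exact M.mem_accepts
    rw [SSTT.out, hrun w]
    by_cases hw : w ∈ L
    · rw [if_pos hw]
      have : M.eval w ∈ M.accept := hmem.1 hw
      show ((if _ then _ else _ : Option _).map _) = _
      rw [if_pos this, SSTT.out, Option.map_map]
      cases T₁.μ (T₁.run w).1 <;>
        simp [Function.comp, TExpr.eval_rmap]
    · rw [if_neg hw]
      have : M.eval w ∉ M.accept := fun hc => hw (hmem.2 hc)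
      show ((if _ then _ else _ : Option _).map _) = _
      rw [if_neg this, SSTT.out, Option.map_map]
      cases T₂.μ (T₂.run w).1 <;>
        simp [Function.comp, TExpr.eval_rmap]
  refine ⟨T, fun w => ?_⟩
  rw [hout w]
  by_cases hw : w ∈ L
  · rw [if_pos hw]; simpa [hw] using hT₁ w
  · rw [if_neg hw]; simpa [hw] using hT₂ w
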